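/- Equivalence of pattern matching with a conjunctive (join) query: Let q be a pattern query whose top-level term is a Match term, in which all Match subpatterns carry pairwise distinct node variables and in which the constraint θ of each Match subpattern p references only the node variables of Match subpatterns occurring within p. Let N be an AST root and N' ∈ D(N). Then N' ∈ q(N) if and only if there exists an assignment σ mapping each Match-subpattern occurrence of q to a node of D(N) such that: (i) σ(q) = N'; (ii) for every Match subpattern p = Match(ℓ, i, [p₁,…,pₙ], θ) in the domain of σ, the node σ(p) has label ℓ and exactly n children, and for each index k such that pₖ is a Match subpattern, the k-th child of σ(p) equals σ(pₖ); and (iii) for every Match subpattern p = Match(ℓ, i, [p₁,…,pₙ], θ) in the domain of σ, the constraint θ holds on the scope Γ_σ that maps the node variable of each Match subpattern p' to the attribute map of σ(p'). -/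

import Mathlib

open Classical
noncomputable section

/-! ### Abstract syntax trees -/

/-- An AST node: a label, an attribute map, and a list of children.  The type
`Attr` stands for the finite partial attribute maps `Σ_M ⇀ 𝔻`. -/
inductive ASTNode (L : Type) (Attr : Type) : Type where
  | mk : L → Attr → List (ASTNode L Attr) → ASTNode L Attr

namespace ASTNode

variable {L Attr : Type}

def label : ASTNode L Attr → L
  | .mk ℓ _ _ => ℓ

def attrs : ASTNode L Attr → Attr
  | .mk _ A _ => A

def children : ASTNode L Attr → List (ASTNode L Attr)
  | .mk _ _ ns => ns

end ASTNode

/-! ### Scopes -/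

/-- A scope: a partial map from node variables to attribute maps. -/
def Scope (I : Type) (Attr : Type) := I → Option Attr

def emptyScope {I Attr : Type} : Scope I Attr := fun _ => none

/-- Left-biased union of scopes. -/
def Scope.union {I Attr : Type} (Γ₁ Γ₂ : Scope I Attr) : Scope I Attr :=
  fun i => (Γ₁ i).orElse (fun _ => Γ₂ i)

/-- `{i ↦ A} ∪ Γ`. -/
def Scope.insert {I Attr : Type} (i : I) (A : Attr) (Γ : Scope I Attr) : Scope I Attr :=
  fun j => if j = i then some A else Γ j

/-! ### Pattern queries -/

/-- Pattern queries: `AnyNode`, or `Match(ℓ, i, [q₁,…,qₙ], θ)` with `θ` a Boolean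
predicate on scopes. -/
inductive Pattern (L : Type) (Attr : Type) (I : Type) : Type where
  | any : Pattern L Attr I
  | node : L → I → List (Pattern L Attr I) → (Scope I Attr → Bool) → Pattern L Attr I

variable {L Attr I : Type}

mutual
/-- Pattern evaluation `⟦q(N)⟧`, returning a Boolean and a scope. -/
def evalPattern : Pattern L Attr I → ASTNode L Attr → Bool × Scope I Attr
  | .any, _ => (true, emptyScope)
  | .node ℓq i qs θ, .mk ℓ A ns =>
      match evalChildren qs ns with
      | none => (false, emptyScope)
      | some Γc =>
          let Γ : Scope I Attr := Scope.insert i A Γc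
          if ℓq = ℓ ∧ θ Γ = true then (true, Γ) else (false, emptyScope)

/-- Evaluate the children: succeeds (returning the union of the child scopes)
iff the lists have equal length and every child pattern matches. -/
def evalChildren : List (Pattern L Attr I) → List (ASTNode L Attr) → Option (Scope I Attr)
  | [], [] => some emptyScope
  | q :: qs, n :: ns =>
      match evalPattern q n, evalChildren qs ns with
      | (true, Γ₁), some Γ₂ => some (Γ₁.union Γ₂)
      | _, _ => none
  | _, _ => none
end

mutual
/-- The descendants `D(N)` of a node (as a list). -/
def ASTNode.descendants : ASTNode L Attr → List (ASTNode L Attr)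
  | .mk ℓ A ns => .mk ℓ A ns :: descendantsList ns

def descendantsList : List (ASTNode L Attr) → List (ASTNode L Attr)
  | [] => []
  | n :: ns => n.descendants ++ descendantsList ns
end

/-- The match set `q(N)`: descendants of `N` on which `q` evaluates to true. -/
def matchSet (q : Pattern L Attr I) (N : ASTNode L Attr) : Set (ASTNode L Attr) :=
  {N' | N' ∈ N.descendants ∧ ∃ Γ, evalPattern q N' = (true, Γ)}

/-! ### Generalized multisets -/

/-- Lift a list (in particular, a set given as a duplicate-free list) to the
generalized multiset counting occurrences. -/
def listGM (l : List (ASTNode L Attr)) : ASTNode L Attr →₀ ℤ :=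
  (l.map (fun x => Finsupp.single x (1 : ℤ))).sum

/-- A view `V_q` is correct for `N` if it maps elements of `q(N)` to `1` and all
other nodes to `0`. -/
def CorrectView (q : Pattern L Attr I) (N : ASTNode L Attr) (V : ASTNode L Attr →₀ ℤ) : Prop :=
  ∀ x, V x = if x ∈ matchSet q N then 1 else 0

/-- `IVM(q, V, Δ)`: add `Δ(x)` to `V(x)` at every `x` on which `q` evaluates to true. -/
def IVM (q : Pattern L Attr I) (V Δ : ASTNode L Attr →₀ ℤ) : ASTNode L Attr →₀ ℤ :=
  V + Δ.filter (fun x => (evalPattern q x).1 = true)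

/-! ### Replacement, depth, ancestors -/

mutual
/-- The replacement `N[R\R']`. -/
def ASTNode.repl (R R' : ASTNode L Attr) : ASTNode L Attr → ASTNode L Attr
  | .mk ℓ A ns =>
      if ASTNode.mk ℓ A ns = R then R' else .mk ℓ A (replList R R' ns)

def replList (R R' : ASTNode L Attr) : List (ASTNode L Attr) → List (ASTNode L Attr)
  | [] => []
  | n :: ns => ASTNode.repl R R' n :: replList R R' ns
end

mutual
/-- The depth `dep(q)` of a pattern. -/
def Pattern.depth : Pattern L Attr I → ℕ
  | .any => 0
  | .node _ _ qs _ => 1 + depthList qs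

def depthList : List (Pattern L Attr I) → ℕ
  | [] => 0
  | q :: qs => max q.depth (depthList qs)
end

/-- `descAt d N M`: `M` is a descendant of `N` at distance exactly `d`. -/
def descAt : ℕ → ASTNode L Attr → ASTNode L Attr → Prop
  | 0, N, M => N = M
  | d + 1, N, M => ∃ c ∈ N.children, descAt d c M

/-- The generalized multiset `{| Aⁱ(R) ↦ 1 : 1 ≤ i ≤ d, Aⁱ(R) exists relative to N |}`
of ancestors of `R` (in `N`) at distances `1,…,d`. -/
def ancestorsGM (N R : ASTNode L Attr) (d : ℕ) : ASTNode L Attr →₀ ℤ :=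
  ∑ i ∈ Finset.Icc 1 d, listGM (N.descendants.filter (fun A => decide (descAt i A R)))

/-- The maximal search set `⌈R, R'⌉_q` (ancestors of `R` are taken in `N`,
ancestors of `R'` in `N[R\R']`). -/
def maxSearchSet (q : Pattern L Attr I) (N R R' : ASTNode L Attr) : ASTNode L Attr →₀ ℤ :=
  listGM R.descendants + ancestorsGM N R q.depth
    - listGM R'.descendants - ancestorsGM (N.repl R R') R' q.depth

/-! ### Node generators -/

/-- Node generators: `Reuse(i)` or `Gen(ℓ, ā, [g₁,…,gₙ])`, where the attribute
expressions `ā` are collectively a function from scopes to attribute maps. -/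
inductive NodeGen (L : Type) (Attr : Type) (I : Type) : Type where
  | reuse : I → NodeGen L Attr I
  | gen : L → (Scope I Attr → Attr) → List (NodeGen L Attr I) → NodeGen L Attr I

mutual
/-- Generator evaluation `⟦g⟧_{Γ,μ}`. -/
def evalGen (Γ : Scope I Attr) (μ : I → ASTNode L Attr) : NodeGen L Attr I → ASTNode L Attr
  | .reuse i => μ i
  | .gen ℓ a gs => .mk ℓ (a Γ) (evalGenList Γ μ gs)

def evalGenList (Γ : Scope I Attr) (μ : I → ASTNode L Attr) :
    List (NodeGen L Attr I) → List (ASTNode L Attr)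
  | [] => []
  | g :: gs => evalGen Γ μ g :: evalGenList Γ μ gs
end

mutual
/-- The matched node pairs `MP(q, R)`. -/
def MP : Pattern L Attr I → ASTNode L Attr → List (Pattern L Attr I × ASTNode L Attr)
  | .any, R => [(.any, R)]
  | .node ℓ i qs θ, .mk ℓ' A ns => (.node ℓ i qs θ, .mk ℓ' A ns) :: MPList qs ns

def MPList : List (Pattern L Attr I) → List (ASTNode L Attr) →
    List (Pattern L Attr I × ASTNode L Attr)
  | q :: qs, n :: ns => MP q n ++ MPList qs ns
  | _, _ => []
end

mutual
/-- The generated node pairs `GP(g, Γ, μ)`. -/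
def GP (Γ : Scope I Attr) (μ : I → ASTNode L Attr) :
    NodeGen L Attr I → List (NodeGen L Attr I × ASTNode L Attr)
  | .reuse i => [(.reuse i, μ i)]
  | .gen ℓ a gs => (.gen ℓ a gs, evalGen Γ μ (.gen ℓ a gs)) :: GPList Γ μ gs

def GPList (Γ : Scope I Attr) (μ : I → ASTNode L Attr) :
    List (NodeGen L Attr I) → List (NodeGen L Attr I × ASTNode L Attr)
  | [] => []
  | g :: gs => GP Γ μ g ++ GPList Γ μ gs
end

/-- A generator `g` is safe for `(q, R)` with scopes `Γ, μ`: it reuses exactly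
the wildcard-matched subtrees of `R`. -/
def SafeGen (q : Pattern L Attr I) (R : ASTNode L Attr) (g : NodeGen L Attr I)
    (Γ : Scope I Attr) (μ : I → ASTNode L Attr) : Prop :=
  ∀ N : ASTNode L Attr,
    (Pattern.any, N) ∈ MP q R ↔ ∃ i, μ i = N ∧ (NodeGen.reuse i, N) ∈ GP Γ μ g

mutual
/-- `|g|`: the number of `Gen` and `Reuse` terms in `g`. -/
def NodeGen.size : NodeGen L Attr I → ℕ
  | .reuse _ => 1
  | .gen _ _ gs => 1 + sizeGenList gs

def sizeGenList : List (NodeGen L Attr I) → ℕ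
  | [] => 0
  | g :: gs => g.size + sizeGenList gs
end

mutual
/-- `|q|`: the number of `Match` and `AnyNode` terms in `q`. -/
def Pattern.size : Pattern L Attr I → ℕ
  | .any => 1
  | .node _ _ qs _ => 1 + sizePatList qs

def sizePatList : List (Pattern L Attr I) → ℕ
  | [] => 0
  | q :: qs => q.size + sizePatList qs
end

/-! ### Paths, occurrences, alignment -/

/-- The node reached from `N` by following the child-index path `π`. -/
def nodeAt (N : ASTNode L Attr) (π : List ℕ) : Option (ASTNode L Attr) :=
  match π with
  | [] => some N
  | k :: π' => (N.children[k]?).bind fun c => nodeAt c π'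

/-- The subpattern occurrence of `q` located at the child-index path `π`. -/
def subAt (q : Pattern L Attr I) (π : List ℕ) : Option (Pattern L Attr I) :=
  match π, q with
  | [], q => some q
  | _ :: _, .any => none
  | k :: π', .node _ _ qs _ => (qs[k]?).bind fun qk => subAt qk π'

/-- `π` is an occurrence of a `Match` subpattern with node variable `i`. -/
def IsMatchVarOcc (q : Pattern L Attr I) (π : List ℕ) (i : I) : Prop :=
  ∃ ℓ qs θ, subAt q π = some (.node ℓ i qs θ)

/-- `π` is an occurrence of a `Match` subpattern of `q`. -/
def IsMatchOcc (q : Pattern L Attr I) (π : List ℕ) : Prop :=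
  ∃ i, IsMatchVarOcc q π i

/-- The node variables of the `Match` subpatterns of `q`. -/
def patVars (q : Pattern L Attr I) : Set I :=
  {i | ∃ π, IsMatchVarOcc q π i}

/-- The scope `Γ_σ` induced by an assignment `σ` of nodes to (paths of)
`Match`-subpattern occurrences of `q`: it maps the node variable of each
`Match` subpattern to the attribute map of the assigned node. -/
def scopeOf (q : Pattern L Attr I) (σ : List ℕ → ASTNode L Attr) : Scope I Attr :=
  fun i => if h : ∃ π, IsMatchVarOcc q π i then some (σ h.choose).attrs else none

mutual
/-- Structural alignment at depth 0. -/
def align0 : Pattern L Attr I → NodeGen L Attr I → Bool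
  | .any, _ => true
  | _, .reuse _ => true
  | .node ℓ _ qs _, .gen ℓ' _ gs =>
      if ℓ = ℓ' ∧ qs.length = gs.length then align0List qs gs else false

def align0List : List (Pattern L Attr I) → List (NodeGen L Attr I) → Bool
  | [], [] => true
  | q :: qs, g :: gs => align0 q g && align0List qs gs
  | _, _ => false
end

/-- Structural alignment at depth `d`. -/
def alignD : ℕ → Pattern L Attr I → NodeGen L Attr I → Bool
  | 0, q, g => align0 q g
  | _ + 1, .any, _ => false
  | d + 1, .node _ _ qs _, g => qs.attach.any (fun qk => alignD d qk.1 g)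

end



section Lemmas
variable {L Attr I : Type}

/-! ### Basic unfolding lemmas -/

theorem evalPattern_any (M : ASTNode L Attr) :
    evalPattern (Pattern.any : Pattern L Attr I) M = (true, emptyScope) := by
  cases M; rw [evalPattern]

theorem evalChildren_nil :
    evalChildren ([] : List (Pattern L Attr I)) ([] : List (ASTNode L Attr)) = some emptyScope := by
  rw [evalChildren]

theorem ASTNode.children_mk (ℓ : L) (A : Attr) (ns : List (ASTNode L Attr)) :
    (ASTNode.mk ℓ A ns).children = ns := rfl
theorem ASTNode.label_mk (ℓ : L) (A : Attr) (ns : List (ASTNode L Attr)) :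
    (ASTNode.mk ℓ A ns).label = ℓ := rfl
theorem ASTNode.attrs_mk (ℓ : L) (A : Attr) (ns : List (ASTNode L Attr)) :
    (ASTNode.mk ℓ A ns).attrs = A := rfl

theorem evalPattern_node_iff (ℓq : L) (i : I) (qs : List (Pattern L Attr I))
    (θ : Scope I Attr → Bool) (M : ASTNode L Attr) (Γ : Scope I Attr) :
    evalPattern (Pattern.node ℓq i qs θ) M = (true, Γ) ↔
      ∃ Γc, evalChildren qs M.children = some Γc ∧ ℓq = M.label ∧
        Γ = Scope.insert i M.attrs Γc ∧ θ Γ = true := by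
  obtain ⟨ℓ, A, ns⟩ := M
  rw [evalPattern]
  simp only [ASTNode.children_mk, ASTNode.label_mk, ASTNode.attrs_mk]
  rcases hc : evalChildren qs ns with _ | Γc
  · simp
  · simp only [Option.some.injEq]
    split
    · rename_i hcond
      constructor
      · intro h
        have h2 := congrArg Prod.snd h
        simp only at h2
        exact ⟨Γc, rfl, hcond.1, h2.symm, by rw [← h2]; exact hcond.2⟩
      · rintro ⟨Γc', hcc, hl, hΓ, hθ⟩
        cases hcc
        rw [hΓ]
    · rename_i hcond
      constructor
      · intro h
        have := congrArg Prod.fst h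
        simp at this
      · rintro ⟨Γc', hcc, hl, hΓ, hθ⟩
        cases hcc
        exact absurd ⟨hl, hΓ ▸ hθ⟩ hcond

theorem evalChildren_cons_iff (q : Pattern L Attr I) (qs : List (Pattern L Attr I))
    (n : ASTNode L Attr) (ns : List (ASTNode L Attr)) (Γ : Scope I Attr) :
    evalChildren (q :: qs) (n :: ns) = some Γ ↔
      ∃ Γ₁ Γ₂, evalPattern q n = (true, Γ₁) ∧ evalChildren qs ns = some Γ₂ ∧ Γ = Γ₁.union Γ₂ := by
  rw [evalChildren]
  rcases h1 : evalPattern q n with ⟨_ | _, Γ₁⟩ <;>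
    rcases h2 : evalChildren qs ns with _ | Γ₂ <;>
      simp_all [eq_comm]

theorem evalChildren_cons_nil (q : Pattern L Attr I) (qs : List (Pattern L Attr I)) :
    evalChildren (q :: qs) ([] : List (ASTNode L Attr)) = none := by
  simp [evalChildren]

theorem evalChildren_nil_cons (n : ASTNode L Attr) (ns : List (ASTNode L Attr)) :
    evalChildren ([] : List (Pattern L Attr I)) (n :: ns) = none := by
  simp [evalChildren]

theorem evalChildren_length {qs : List (Pattern L Attr I)} {ns : List (ASTNode L Attr)}
    {Γ : Scope I Attr} (h : evalChildren qs ns = some Γ) : qs.length = ns.length := by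
  induction qs generalizing ns Γ with
  | nil => cases ns with
    | nil => rfl
    | cons n ns => rw [evalChildren_nil_cons] at h; cases h
  | cons q qs ih =>
    cases ns with
    | nil => rw [evalChildren_cons_nil] at h; cases h
    | cons n ns =>
      obtain ⟨Γ₁, Γ₂, _, h2, _⟩ := (evalChildren_cons_iff _ _ _ _ _).1 h
      simp [ih h2]
end Lemmas
section Lemmas2
variable {L Attr I : Type}

theorem self_mem_descendants (M : ASTNode L Attr) : M ∈ M.descendants := by
  obtain ⟨ℓ, A, ns⟩ := M
  rw [ASTNode.descendants]
  exact List.mem_cons_self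

theorem mem_descendantsList_iff {ns : List (ASTNode L Attr)} {x : ASTNode L Attr} :
    x ∈ descendantsList ns ↔ ∃ c ∈ ns, x ∈ c.descendants := by
  induction ns with
  | nil => rw [descendantsList]; simp
  | cons n ns ih =>
    rw [descendantsList]
    simp [ih]

theorem mem_descendants_iff {M x : ASTNode L Attr} :
    x ∈ M.descendants ↔ x = M ∨ ∃ c ∈ M.children, x ∈ c.descendants := by
  obtain ⟨ℓ, A, ns⟩ := M
  rw [ASTNode.descendants]
  simp [mem_descendantsList_iff, ASTNode.children_mk]

theorem descendants_trans : ∀ (M M' x : ASTNode L Attr),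
    M' ∈ M.descendants → x ∈ M'.descendants → x ∈ M.descendants
  | .mk ℓ A ns, M', x, h1, h2 => by
    rcases mem_descendants_iff.1 h1 with h | ⟨c, hc, hmem⟩
    · rw [h] at h2; exact h2
    · rw [ASTNode.children_mk] at hc
      exact mem_descendants_iff.2 (Or.inr ⟨c, by rw [ASTNode.children_mk]; exact hc,
        descendants_trans c M' x hmem h2⟩)
termination_by M _ _ => sizeOf M
decreasing_by
  have := List.sizeOf_lt_of_mem hc
  simp only [ASTNode.children_mk] at this
  simp only [ASTNode.mk.sizeOf_spec]
  omega
end Lemmas2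
section Lemmas3
variable {L Attr I : Type}

theorem mem_of_getElem?' {α : Type*} {l : List α} {k : ℕ} {a : α} (h : l[k]? = some a) :
    a ∈ l := by
  obtain ⟨hk, rfl⟩ := List.getElem?_eq_some_iff.1 h
  exact List.getElem_mem _

theorem nodeAt_nil (N : ASTNode L Attr) : nodeAt N [] = some N := rfl
theorem nodeAt_cons (N : ASTNode L Attr) (k : ℕ) (π : List ℕ) :
    nodeAt N (k :: π) = (N.children[k]?).bind fun c => nodeAt c π := rfl
theorem subAt_nil (q : Pattern L Attr I) : subAt q [] = some q := by
  cases q <;> rfl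
theorem subAt_any_cons (k : ℕ) (π : List ℕ) :
    subAt (Pattern.any : Pattern L Attr I) (k :: π) = none := rfl
theorem subAt_node_cons (ℓ : L) (i : I) (qs : List (Pattern L Attr I)) (θ : Scope I Attr → Bool)
    (k : ℕ) (π : List ℕ) :
    subAt (Pattern.node ℓ i qs θ) (k :: π) = (qs[k]?).bind fun qk => subAt qk π := rfl

theorem nodeAt_append (N : ASTNode L Attr) (π₁ π₂ : List ℕ) :
    nodeAt N (π₁ ++ π₂) = (nodeAt N π₁).bind fun M => nodeAt M π₂ := by
  induction π₁ generalizing N with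
  | nil => simp [nodeAt_nil]
  | cons k π₁ ih =>
    rw [List.cons_append, nodeAt_cons, nodeAt_cons, Option.bind_assoc]
    cases N.children[k]? with
    | none => rfl
    | some c => simp [ih]

theorem subAt_append (q : Pattern L Attr I) (π₁ π₂ : List ℕ) :
    subAt q (π₁ ++ π₂) = (subAt q π₁).bind fun p => subAt p π₂ := by
  induction π₁ generalizing q with
  | nil => simp [subAt_nil]
  | cons k π₁ ih =>
    cases q with
    | any => rw [List.cons_append, subAt_any_cons, subAt_any_cons]; rfl
    | node ℓ i qs θ =>
      rw [List.cons_append, subAt_node_cons, subAt_node_cons, Option.bind_assoc]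
      cases qs[k]? with
      | none => rfl
      | some qk => simp [ih]

theorem nodeAt_mem_descendants {N M : ASTNode L Attr} {π : List ℕ}
    (h : nodeAt N π = some M) : M ∈ N.descendants := by
  induction π generalizing N with
  | nil => rw [nodeAt_nil] at h; cases h; exact self_mem_descendants _
  | cons k π ih =>
    rw [nodeAt_cons] at h
    cases hc : N.children[k]? with
    | none => rw [hc] at h; cases h
    | some c =>
      rw [hc] at h
      simp only [Option.bind_some] at h
      exact descendants_trans _ _ _
        (mem_descendants_iff.2 (Or.inr ⟨c, mem_of_getElem?' hc, self_mem_descendants c⟩))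
        (ih h)
end Lemmas3
section Lemmas4
variable {L Attr I : Type}

theorem emptyScope_apply (j : I) : (emptyScope : Scope I Attr) j = none := rfl

theorem Scope.insert_apply (i : I) (A : Attr) (Γ : Scope I Attr) (j : I) :
    (Scope.insert i A Γ) j = if j = i then some A else Γ j := rfl

theorem Scope.union_apply_none {Γ₁ Γ₂ : Scope I Attr} {j : I} (h : Γ₁ j = none) :
    (Γ₁.union Γ₂) j = Γ₂ j := by
  simp [Scope.union, h]

theorem Scope.union_apply_some {Γ₁ Γ₂ : Scope I Attr} {j : I} {a : Attr} (h : Γ₁ j = some a) :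
    (Γ₁.union Γ₂) j = some a := by
  simp [Scope.union, h]

theorem Pattern.size_pos (p : Pattern L Attr I) : 1 ≤ p.size := by
  cases p <;> rw [Pattern.size] <;> omega

theorem size_le_sizePatList {p : Pattern L Attr I} : ∀ {qs : List (Pattern L Attr I)},
    p ∈ qs → p.size ≤ sizePatList qs := by
  intro qs h
  induction qs with
  | nil => cases h
  | cons q qs ih =>
    rw [sizePatList]
    rcases List.mem_cons.1 h with rfl | h
    · omega
    · have := ih h; omega

theorem evalChildren_get {qs : List (Pattern L Attr I)} {ns : List (ASTNode L Attr)}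
    {Γ : Scope I Attr} (h : evalChildren qs ns = some Γ) :
    ∀ (k : ℕ) qk, qs[k]? = some qk → ∃ nk Γk, ns[k]? = some nk ∧ evalPattern qk nk = (true, Γk) ∧
      (∀ j A, Γk j = some A → ∃ A', Γ j = some A') := by
  induction qs generalizing ns Γ with
  | nil => intro k qk hk; simp at hk
  | cons q qs ih =>
    cases ns with
    | nil => rw [evalChildren_cons_nil] at h; cases h
    | cons n ns =>
      obtain ⟨Γ₁, Γ₂, h1, h2, rfl⟩ := (evalChildren_cons_iff _ _ _ _ _).1 h
      intro k qk hk
      cases k with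
      | zero =>
        simp only [List.getElem?_cons_zero, Option.some.injEq] at hk
        subst hk
        exact ⟨n, Γ₁, List.getElem?_cons_zero, h1, fun j A hj => ⟨A, Scope.union_apply_some hj⟩⟩
      | succ k =>
        simp only [List.getElem?_cons_succ] at hk
        obtain ⟨nk, Γk, hnk, hek, hsup⟩ := ih h2 k qk hk
        refine ⟨nk, Γk, by simpa using hnk, hek, fun j A hj => ?_⟩
        obtain ⟨A', hA'⟩ := hsup j A hj
        cases hΓ₁ : Γ₁ j with
        | none => exact ⟨A', by rw [Scope.union_apply_none hΓ₁]; exact hA'⟩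
        | some a => exact ⟨a, Scope.union_apply_some hΓ₁⟩

theorem evalChildren_scope_some {qs : List (Pattern L Attr I)} {ns : List (ASTNode L Attr)}
    {Γ : Scope I Attr} (h : evalChildren qs ns = some Γ) {j : I} {A : Attr}
    (hj : Γ j = some A) :
    ∃ k : ℕ, ∃ qk nk Γk, qs[k]? = some qk ∧ ns[k]? = some nk ∧ evalPattern qk nk = (true, Γk) ∧
      Γk j = some A := by
  induction qs generalizing ns Γ with
  | nil =>
    cases ns with
    | nil => rw [evalChildren_nil] at h; cases h; rw [emptyScope_apply] at hj; cases hj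
    | cons n ns => rw [evalChildren_nil_cons] at h; cases h
  | cons q qs ih =>
    cases ns with
    | nil => rw [evalChildren_cons_nil] at h; cases h
    | cons n ns =>
      obtain ⟨Γ₁, Γ₂, h1, h2, rfl⟩ := (evalChildren_cons_iff _ _ _ _ _).1 h
      cases hΓ₁ : Γ₁ j with
      | some a =>
        rw [Scope.union_apply_some hΓ₁] at hj
        cases hj
        exact ⟨0, q, n, Γ₁, List.getElem?_cons_zero, List.getElem?_cons_zero, h1, hΓ₁⟩
      | none =>
        rw [Scope.union_apply_none hΓ₁] at hj
        obtain ⟨k, qk, nk, Γk, hqk, hnk, hek, hjk⟩ := ih h2 hj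
        exact ⟨k + 1, qk, nk, Γk, by simpa using hqk, by simpa using hnk, hek, hjk⟩
end Lemmas4
section Lemmas5
variable {L Attr I : Type}

theorem eval_sound : ∀ (p : Pattern L Attr I) (M : ASTNode L Attr) (Γ : Scope I Attr),
    evalPattern p M = (true, Γ) →
    (∀ (π : List ℕ) (p' : Pattern L Attr I), subAt p π = some p' →
      ∃ M' Γ', nodeAt M π = some M' ∧ evalPattern p' M' = (true, Γ')) ∧
    (∀ (j : I) (A : Attr), Γ j = some A → ∃ (π : List ℕ), ∃ ℓ qs' θ' M',
      subAt p π = some (Pattern.node ℓ j qs' θ') ∧ nodeAt M π = some M' ∧ A = M'.attrs) ∧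
    (∀ (π : List ℕ) (ℓ : L) (j : I) qs' θ', subAt p π = some (Pattern.node ℓ j qs' θ') →
      ∃ A, Γ j = some A)
  | Pattern.any, M, Γ, h => by
    rw [evalPattern_any] at h
    have hΓ : Γ = emptyScope := (congrArg Prod.snd h).symm
    subst hΓ
    refine ⟨?_, ?_, ?_⟩
    · rintro (_ | ⟨k, π⟩) p' hp
      · rw [subAt_nil] at hp; cases hp
        exact ⟨M, emptyScope, nodeAt_nil M, evalPattern_any M⟩
      · rw [subAt_any_cons] at hp; cases hp
    · intro j A hj; rw [emptyScope_apply] at hj; cases hj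
    · rintro (_ | ⟨k, π⟩) ℓ j qs' θ' hp
      · rw [subAt_nil] at hp; cases hp
      · rw [subAt_any_cons] at hp; cases hp
  | Pattern.node ℓq i qs θ, M, Γ, h => by
    obtain ⟨Γc, hc, hℓ, hΓ, hθ⟩ := (evalPattern_node_iff _ _ _ _ _ _).1 h
    refine ⟨?_, ?_, ?_⟩
    · rintro (_ | ⟨k, π⟩) p' hp
      · rw [subAt_nil] at hp; cases hp
        exact ⟨M, Γ, nodeAt_nil M, h⟩
      · rw [subAt_node_cons] at hp
        obtain ⟨qk, hqk, hsub⟩ := Option.bind_eq_some_iff.1 hp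
        obtain ⟨nk, Γk, hnk, hek, -⟩ := evalChildren_get hc k qk hqk
        have := mem_of_getElem?' hqk
        obtain ⟨h1, -, -⟩ := eval_sound qk nk Γk hek
        obtain ⟨M', Γ', hM', he'⟩ := h1 π p' hsub
        exact ⟨M', Γ', by rw [nodeAt_cons, hnk, Option.bind_some]; exact hM', he'⟩
    · intro j A hj
      rw [hΓ, Scope.insert_apply] at hj
      by_cases hji : j = i
      · rw [if_pos hji] at hj
        subst hji
        exact ⟨[], ℓq, qs, θ, M, subAt_nil _, nodeAt_nil M,
          (Option.some.inj hj).symm⟩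
      · rw [if_neg hji] at hj
        obtain ⟨k, qk, nk, Γk, hqk, hnk, hek, hjk⟩ := evalChildren_scope_some hc hj
        have := mem_of_getElem?' hqk
        obtain ⟨-, h2, -⟩ := eval_sound qk nk Γk hek
        obtain ⟨π, ℓ', qs', θ', M', hsub, hM', hA⟩ := h2 j A hjk
        refine ⟨k :: π, ℓ', qs', θ', M', ?_, ?_, hA⟩
        · rw [subAt_node_cons, hqk, Option.bind_some]; exact hsub
        · rw [nodeAt_cons, hnk, Option.bind_some]; exact hM'
    · rintro (_ | ⟨k, π⟩) ℓ' j qs' θ' hp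
      · rw [subAt_nil] at hp
        cases hp
        exact ⟨M.attrs, by rw [hΓ, Scope.insert_apply, if_pos rfl]⟩
      · rw [subAt_node_cons] at hp
        obtain ⟨qk, hqk, hsub⟩ := Option.bind_eq_some_iff.1 hp
        obtain ⟨nk, Γk, hnk, hek, hsup⟩ := evalChildren_get hc k qk hqk
        have := mem_of_getElem?' hqk
        obtain ⟨-, -, h3⟩ := eval_sound qk nk Γk hek
        obtain ⟨A, hA⟩ := h3 π ℓ' j qs' θ' hsub
        obtain ⟨A', hA'⟩ := hsup j A hA
        rw [hΓ, Scope.insert_apply]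
        by_cases hji : j = i
        · exact ⟨M.attrs, by rw [if_pos hji]⟩
        · exact ⟨A', by rw [if_neg hji]; exact hA'⟩
termination_by p => p.size
decreasing_by
  all_goals {
    have h1 := size_le_sizePatList this
    have h2 : (Pattern.node ℓq i qs θ).size = 1 + sizePatList qs := by rw [Pattern.size]
    omega }
end Lemmas5
section Lemmas6
variable {L Attr I : Type}

theorem not_isMatchVarOcc_any {π : List ℕ} {j : I} :
    ¬ IsMatchVarOcc (Pattern.any : Pattern L Attr I) π j := by
  rintro ⟨ℓ, qs, θ, h⟩
  cases π with
  | nil => rw [subAt_nil] at h; cases h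
  | cons k π => rw [subAt_any_cons] at h; cases h

theorem isMatchVarOcc_lift {q p : Pattern L Attr I} {π₀ π : List ℕ} {j : I}
    (h0 : subAt q π₀ = some p) (h : IsMatchVarOcc p π j) :
    IsMatchVarOcc q (π₀ ++ π) j := by
  obtain ⟨ℓ, qs, θ, h⟩ := h
  exact ⟨ℓ, qs, θ, by rw [subAt_append, h0, Option.bind_some]; exact h⟩

theorem isMatchVarOcc_node_cons {ℓ : L} {i : I} {qs : List (Pattern L Attr I)}
    {θ : Scope I Attr → Bool} {k : ℕ} {π : List ℕ} {j : I} :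
    IsMatchVarOcc (Pattern.node ℓ i qs θ) (k :: π) j ↔
      ∃ qk, qs[k]? = some qk ∧ IsMatchVarOcc qk π j := by
  constructor
  · rintro ⟨ℓ', qs', θ', h⟩
    rw [subAt_node_cons] at h
    obtain ⟨qk, hqk, hsub⟩ := Option.bind_eq_some_iff.1 h
    exact ⟨qk, hqk, ℓ', qs', θ', hsub⟩
  · rintro ⟨qk, hqk, ℓ', qs', θ', hsub⟩
    exact ⟨ℓ', qs', θ', by rw [subAt_node_cons, hqk, Option.bind_some]; exact hsub⟩

theorem scopeOf_eq {q : Pattern L Attr I} {σ : List ℕ → ASTNode L Attr}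
    (hdistinct : ∀ π₁ π₂ i, IsMatchVarOcc q π₁ i → IsMatchVarOcc q π₂ i → π₁ = π₂)
    {π : List ℕ} {j : I} (h : IsMatchVarOcc q π j) :
    scopeOf q σ j = some (σ π).attrs := by
  have hex : ∃ π', IsMatchVarOcc q π' j := ⟨π, h⟩
  rw [scopeOf, dif_pos hex, hdistinct _ _ _ hex.choose_spec h]
end Lemmas6
section Lemmas7
variable {L Attr I : Type}
variable {q : Pattern L Attr I} {σ : List ℕ → ASTNode L Attr}

mutual
theorem eval_complete
    (hdistinct : ∀ π₁ π₂ i, IsMatchVarOcc q π₁ i → IsMatchVarOcc q π₂ i → π₁ = π₂)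
    (hlocal : ∀ π ℓ i qs θ, subAt q π = some (Pattern.node ℓ i qs θ) →
        ∀ Γ Γ' : Scope I Attr,
          (∀ j ∈ patVars (Pattern.node ℓ i qs θ), Γ j = Γ' j) → θ Γ = θ Γ')
    (hstruct : ∀ π ℓ i qs θ, subAt q π = some (Pattern.node ℓ i qs θ) →
          (σ π).label = ℓ ∧ (σ π).children.length = qs.length ∧
          ∀ k ℓ' i' qs' θ', qs[k]? = some (Pattern.node ℓ' i' qs' θ') →
            (σ π).children[k]? = some (σ (π ++ [k])))
    (hθ : ∀ π ℓ i qs θ, subAt q π = some (Pattern.node ℓ i qs θ) → θ (scopeOf q σ) = true) :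
    ∀ (p : Pattern L Attr I) (π₀ : List ℕ), subAt q π₀ = some p →
    ∀ (M : ASTNode L Attr), (p = Pattern.any ∨ M = σ π₀) →
    ∃ Γ, evalPattern p M = (true, Γ) ∧
      ∀ j, Γ j = if (∃ π, IsMatchVarOcc p π j) then scopeOf q σ j else none
  | Pattern.any, π₀, h0, M, _ => by
    refine ⟨emptyScope, evalPattern_any M, fun j => ?_⟩
    rw [if_neg, emptyScope_apply]
    rintro ⟨π, h⟩
    exact not_isMatchVarOcc_any h
  | Pattern.node ℓ i qsp θp, π₀, h0, M, hM => by
    rcases hM with hM | rfl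
    · cases hM
    obtain ⟨hlabel, hlen, hchild⟩ := hstruct π₀ ℓ i qsp θp h0
    have hocc0 : IsMatchVarOcc q π₀ i := ⟨ℓ, qsp, θp, h0⟩
    obtain ⟨Γc, hGc, hGcval⟩ :=
      eval_complete_list hdistinct hlocal hstruct hθ qsp π₀ 0
        ((σ π₀).children) hlen.symm
        (by
          intro m qm hm
          rw [subAt_append, h0, Option.bind_some, Nat.zero_add, subAt_node_cons, hm,
            Option.bind_some, subAt_nil])
        (by
          intro m qm nm hm hn
          cases qm with
          | any => exact Or.inl rfl
          | node ℓ' i' qs' θ' =>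
            refine Or.inr ?_
            rw [Nat.zero_add]
            have := hchild m ℓ' i' qs' θ' hm
            rw [hn] at this
            exact Option.some.inj this)
    set Γ : Scope I Attr := Scope.insert i (σ π₀).attrs Γc with hΓdef
    have hval : ∀ j, Γ j = if (∃ π, IsMatchVarOcc (Pattern.node ℓ i qsp θp) π j)
        then scopeOf q σ j else none := by
      intro j
      by_cases hji : j = i
      · subst hji
        rw [if_pos ⟨[], ℓ, qsp, θp, subAt_nil _⟩]
        rw [hΓdef, Scope.insert_apply, if_pos rfl, scopeOf_eq hdistinct hocc0]
      · rw [hΓdef, Scope.insert_apply, if_neg hji, hGcval j]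
        congr 1
        simp only [eq_iff_iff]
        constructor
        · rintro ⟨m, π', qm, hqm, hocc⟩
          exact ⟨m :: π', isMatchVarOcc_node_cons.2 ⟨qm, hqm, hocc⟩⟩
        · rintro ⟨π, hocc⟩
          cases π with
          | nil =>
            obtain ⟨ℓ', qs', θ', hh⟩ := hocc
            rw [subAt_nil] at hh
            cases hh
            exact absurd rfl hji
          | cons k π' =>
            obtain ⟨qk, hqk, hocc'⟩ := isMatchVarOcc_node_cons.1 hocc
            exact ⟨k, π', qk, hqk, hocc'⟩
    have hθΓ : θp Γ = true := by
      rw [hlocal π₀ ℓ i qsp θp h0 Γ (scopeOf q σ) ?_]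
      · exact hθ π₀ ℓ i qsp θp h0
      · rintro j ⟨π, hocc⟩
        rw [hval j, if_pos ⟨π, hocc⟩]
    refine ⟨Γ, ?_, hval⟩
    refine (evalPattern_node_iff _ _ _ _ _ _).2 ⟨Γc, hGc, hlabel.symm, ?_, hθΓ⟩
    rfl
termination_by p _ _ _ _ => (Pattern.size p, 0)
decreasing_by
  apply Prod.Lex.left
  rw [Pattern.size]
  omega

theorem eval_complete_list
    (hdistinct : ∀ π₁ π₂ i, IsMatchVarOcc q π₁ i → IsMatchVarOcc q π₂ i → π₁ = π₂)
    (hlocal : ∀ π ℓ i qs θ, subAt q π = some (Pattern.node ℓ i qs θ) →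
        ∀ Γ Γ' : Scope I Attr,
          (∀ j ∈ patVars (Pattern.node ℓ i qs θ), Γ j = Γ' j) → θ Γ = θ Γ')
    (hstruct : ∀ π ℓ i qs θ, subAt q π = some (Pattern.node ℓ i qs θ) →
          (σ π).label = ℓ ∧ (σ π).children.length = qs.length ∧
          ∀ k ℓ' i' qs' θ', qs[k]? = some (Pattern.node ℓ' i' qs' θ') →
            (σ π).children[k]? = some (σ (π ++ [k])))
    (hθ : ∀ π ℓ i qs θ, subAt q π = some (Pattern.node ℓ i qs θ) → θ (scopeOf q σ) = true) :
    ∀ (qs' : List (Pattern L Attr I)) (π₀ : List ℕ) (k₀ : ℕ) (ns' : List (ASTNode L Attr)),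
      qs'.length = ns'.length →
      (∀ (m : ℕ) qm, qs'[m]? = some qm → subAt q (π₀ ++ [k₀ + m]) = some qm) →
      (∀ (m : ℕ) qm nm, qs'[m]? = some qm → ns'[m]? = some nm →
        (qm = Pattern.any ∨ nm = σ (π₀ ++ [k₀ + m]))) →
      ∃ Γc, evalChildren qs' ns' = some Γc ∧
        ∀ j, Γc j = if (∃ m : ℕ, ∃ π qm, qs'[m]? = some qm ∧ IsMatchVarOcc qm π j)
          then scopeOf q σ j else none
  | [], π₀, k₀, ns', hlen, hsub, hdisj => by
    cases ns' with
    | nil =>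
      refine ⟨emptyScope, evalChildren_nil, fun j => ?_⟩
      rw [if_neg, emptyScope_apply]
      rintro ⟨m, π, qm, hqm, -⟩
      simp at hqm
    | cons n ns => cases hlen
  | qm :: rest, π₀, k₀, ns', hlen, hsub, hdisj => by
    cases ns' with
    | nil => cases hlen
    | cons nm nrest =>
      obtain ⟨Γ₁, he1, hv1⟩ :=
        eval_complete hdistinct hlocal hstruct hθ qm (π₀ ++ [k₀])
          (by have := hsub 0 qm List.getElem?_cons_zero; rwa [Nat.add_zero] at this)
          nm
          (by have := hdisj 0 qm nm List.getElem?_cons_zero List.getElem?_cons_zero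
              rwa [Nat.add_zero] at this)
      obtain ⟨Γ₂, he2, hv2⟩ :=
        eval_complete_list hdistinct hlocal hstruct hθ rest π₀ (k₀ + 1) nrest
          (by simpa using hlen)
          (by
            intro m q' hm
            have := hsub (m + 1) q' (by simpa using hm)
            rwa [show k₀ + (m + 1) = k₀ + 1 + m by omega] at this)
          (by
            intro m q' n' hm hn
            have := hdisj (m + 1) q' n' (by simpa using hm) (by simpa using hn)
            rwa [show k₀ + (m + 1) = k₀ + 1 + m by omega] at this)
      refine ⟨Γ₁.union Γ₂, (evalChildren_cons_iff _ _ _ _ _).2 ⟨Γ₁, Γ₂, he1, he2, rfl⟩,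
        fun j => ?_⟩
      by_cases hj1 : ∃ π, IsMatchVarOcc qm π j
      · obtain ⟨π, hocc⟩ := hj1
        have hglob : IsMatchVarOcc q ((π₀ ++ [k₀]) ++ π) j :=
          isMatchVarOcc_lift
            (by have := hsub 0 qm List.getElem?_cons_zero; rwa [Nat.add_zero] at this) hocc
        have h1 : Γ₁ j = some (σ ((π₀ ++ [k₀]) ++ π)).attrs := by
          rw [hv1 j, if_pos ⟨π, hocc⟩, scopeOf_eq hdistinct hglob]
        rw [Scope.union_apply_some h1, if_pos ⟨0, π, qm, List.getElem?_cons_zero, hocc⟩,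
          scopeOf_eq hdistinct hglob]
      · have h1 : Γ₁ j = none := by rw [hv1 j, if_neg hj1]
        rw [Scope.union_apply_none h1, hv2 j]
        congr 1
        simp only [eq_iff_iff]
        constructor
        · rintro ⟨m, π, q', hq', hocc⟩
          exact ⟨m + 1, π, q', by simpa using hq', hocc⟩
        · rintro ⟨m, π, q', hq', hocc⟩
          cases m with
          | zero =>
            rw [List.getElem?_cons_zero] at hq'
            cases hq'
            exact absurd ⟨π, hocc⟩ hj1
          | succ m => exact ⟨m, π, q', by simpa using hq', hocc⟩
termination_by qs' _ _ _ _ _ _ => (sizePatList qs', 1)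
decreasing_by
  · have := Pattern.size_pos qm
    rcases Nat.lt_or_ge (Pattern.size qm) (sizePatList (qm :: rest)) with h | h
    · exact Prod.Lex.left _ _ h
    · have heq : Pattern.size qm = sizePatList (qm :: rest) := by
        rw [sizePatList] at h ⊢
        omega
      rw [heq]
      exact Prod.Lex.right _ (by omega)
  · apply Prod.Lex.left
    rw [sizePatList]
    have := Pattern.size_pos qm
    omega
end
end Lemmas7

/-- **Equivalence of pattern matching with a conjunctive (join)
query.** For a pattern `q` whose top-level term is a `Match`, with pairwise
distinct node variables on its `Match` subpatterns, and whose constraints only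
reference variables of `Match` subpatterns occurring within them: a descendant
`N'` of `N` is in `q(N)` iff there is an assignment `σ` of nodes of `D(N)` to
the `Match`-subpattern occurrences of `q` (identified by their child-index
paths) with `σ(q) = N'`, satisfying the structural join conditions and the
constraints on the induced scope. -/
theorem pattern_match_join_equiv {L Attr I : Type}
    (q : Pattern L Attr I)
    (hq : ∃ ℓ i qs θ, q = Pattern.node ℓ i qs θ)
    (hdistinct : ∀ π₁ π₂ i, IsMatchVarOcc q π₁ i → IsMatchVarOcc q π₂ i → π₁ = π₂)
    (hlocal : ∀ π ℓ i qs θ, subAt q π = some (Pattern.node ℓ i qs θ) →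
        ∀ Γ Γ' : Scope I Attr,
          (∀ j ∈ patVars (Pattern.node ℓ i qs θ), Γ j = Γ' j) → θ Γ = θ Γ')
    (N N' : ASTNode L Attr) (hN' : N' ∈ N.descendants) :
    N' ∈ matchSet q N ↔
      ∃ σ : List ℕ → ASTNode L Attr,
        σ [] = N' ∧
        (∀ π, IsMatchOcc q π → σ π ∈ N.descendants) ∧
        (∀ π ℓ i qs θ, subAt q π = some (Pattern.node ℓ i qs θ) →
          (σ π).label = ℓ ∧ (σ π).children.length = qs.length ∧
          ∀ k ℓ' i' qs' θ', qs[k]? = some (Pattern.node ℓ' i' qs' θ') →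
            (σ π).children[k]? = some (σ (π ++ [k]))) ∧
        (∀ π ℓ i qs θ, subAt q π = some (Pattern.node ℓ i qs θ) →
          θ (scopeOf q σ) = true) := by
  constructor
  · rintro ⟨-, Γ, hev⟩
    obtain ⟨hS1, -, -⟩ := eval_sound q N' Γ hev
    set σ : List ℕ → ASTNode L Attr := fun π => (nodeAt N' π).getD N' with hσ
    have hσ_at : ∀ {π M'}, nodeAt N' π = some M' → σ π = M' := by
      intro π M' h
      rw [hσ]; simp only [h, Option.getD_some]
    refine ⟨σ, by rw [hσ]; simp [nodeAt_nil], ?_, ?_, ?_⟩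
    · rintro π ⟨i, ℓ, qs, θ, hsub⟩
      obtain ⟨M', Γ', hM', -⟩ := hS1 π _ hsub
      rw [hσ_at hM']
      exact descendants_trans N N' M' hN' (nodeAt_mem_descendants hM')
    · intro π ℓ i qs θ hsub
      obtain ⟨M', Γ', hM', he'⟩ := hS1 π _ hsub
      obtain ⟨Γc, hc, hℓ, -, -⟩ := (evalPattern_node_iff _ _ _ _ _ _).1 he'
      rw [hσ_at hM']
      refine ⟨hℓ.symm, (evalChildren_length hc).symm, ?_⟩
      intro k ℓ' i' qs' θ' hqk
      have hk : k < M'.children.length := by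
        have := List.getElem?_eq_some_iff.1 hqk
        rw [← evalChildren_length hc]
        exact this.1
      have hck : M'.children[k]? = some M'.children[k] := List.getElem?_eq_getElem hk
      have hσc : σ (π ++ [k]) = M'.children[k] := by
        apply hσ_at
        rw [nodeAt_append, hM', Option.bind_some, nodeAt_cons, hck, Option.bind_some, nodeAt_nil]
      rw [hck, hσc]
    · intro π ℓ i qs θ hsub
      obtain ⟨M', Γ', hM', he'⟩ := hS1 π _ hsub
      obtain ⟨-, -, -, -, hθ'⟩ := (evalPattern_node_iff _ _ _ _ _ _).1 he'
      rw [hlocal π ℓ i qs θ hsub (scopeOf q σ) Γ' ?_]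
      · exact hθ'
      · rintro j ⟨πj, hoccj⟩
        obtain ⟨-, hS2', hS3'⟩ := eval_sound _ M' Γ' he'
        obtain ⟨ℓj, qsj, θj, hsubj⟩ := hoccj
        obtain ⟨A, hA⟩ := hS3' πj ℓj j qsj θj hsubj
        obtain ⟨π'', ℓ'', qs'', θ'', M'', hsub'', hM'', hattr⟩ := hS2' j A hA
        have hglob : IsMatchVarOcc q (π ++ π'') j :=
          isMatchVarOcc_lift hsub ⟨ℓ'', qs'', θ'', hsub''⟩
        have hσM : σ (π ++ π'') = M'' :=
          hσ_at (by rw [nodeAt_append, hM', Option.bind_some]; exact hM'')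
        rw [scopeOf_eq hdistinct hglob, hA, hattr, hσM]
  · rintro ⟨σ, hroot, -, hstruct, hθs⟩
    obtain ⟨Γ, hev, -⟩ :=
      eval_complete hdistinct hlocal hstruct hθs q [] (subAt_nil q) N' (Or.inr hroot.symm)
    exact ⟨hN', Γ, hev⟩
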